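/- Let S be a blocking semioval with exactly 25 points in PG(2,11) having a 10-secant line ℓ, let Q and R be the two points of ℓ not in S, and let S_R be the set of points of S not on ℓ whose unique tangent line to S passes through R. Then every line through Q other than ℓ that contains a point of S_R contains at least two points of S_R. -/

import Mathlib

set_option maxHeartbeats 1000000

instance : Fact (Nat.Prime 11) := ⟨by norm_num⟩

/-- The points of `PG(2,11)`: the projectivization of `(ZMod 11)^3`. -/
abbrev PGPoint : Type := Projectivization (ZMod 11) (Fin 3 → ZMod 11)

/-- The lines of `PG(2,11)`: the 2-dimensional subspaces of `(ZMod 11)^3`. -/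
abbrev PGLine : Type :=
  {W : Submodule (ZMod 11) (Fin 3 → ZMod 11) // Module.finrank (ZMod 11) W = 2}

/-- Incidence: a point lies on a line when its representing 1-dimensional
subspace is contained in the line's 2-dimensional subspace. -/
def PGmem (P : PGPoint) (L : PGLine) : Prop := Projectivization.submodule P ≤ L.val

/-- The set of points lying on a line. -/
def linePts (L : PGLine) : Set PGPoint := {P | PGmem P L}

/-- The set of points of `S` lying on the line `L`. -/
def secantPts (S : Set PGPoint) (L : PGLine) : Set PGPoint := {P ∈ S | PGmem P L}

/-- A line is a `k`-secant to `S` if it meets `S` in exactly `k` points. -/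
def IsSecant (S : Set PGPoint) (k : ℕ) (L : PGLine) : Prop := (secantPts S L).ncard = k

/-- A tangent line to `S` is a 1-secant. -/
def IsTangent (S : Set PGPoint) (L : PGLine) : Prop := IsSecant S 1 L

/-- A blocking set: every line meets `S`, but `S` contains no line. -/
def IsBlockingSet (S : Set PGPoint) : Prop :=
  (∀ L : PGLine, (secantPts S L).Nonempty) ∧ ∀ L : PGLine, ¬ linePts L ⊆ S

/-- A semioval: every point of `S` lies on exactly one tangent line to `S`. -/
def IsSemioval (S : Set PGPoint) : Prop :=
  ∀ P ∈ S, ∃! L : PGLine, PGmem P L ∧ IsTangent S L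

/-- A blocking semioval is both a blocking set and a semioval. -/
def IsBlockingSemioval (S : Set PGPoint) : Prop := IsBlockingSet S ∧ IsSemioval S

open Projectivization Module

instance : Finite PGPoint := Quotient.finite _

/-- Two distinct points lie on at most one common line. -/
lemma PG.line_unique {P P' : PGPoint} (h : P ≠ P') {L1 L2 : PGLine}
    (h1 : PGmem P L1) (h1' : PGmem P' L1) (h2 : PGmem P L2) (h2' : PGmem P' L2) :
    L1 = L2 := by
  have key : ∀ L : PGLine, PGmem P L → PGmem P' L →
      L.val = Projectivization.submodule P ⊔ Projectivization.submodule P' := by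
    intro L hP hP'
    have hle : Projectivization.submodule P ⊔ Projectivization.submodule P' ≤ L.val :=
      sup_le hP hP'
    have h2le : 2 ≤ finrank (ZMod 11)
        (Projectivization.submodule P ⊔ Projectivization.submodule P' :
          Submodule (ZMod 11) (Fin 3 → ZMod 11)) := by
      by_contra hlt
      push_neg at hlt
      have hfr : finrank (ZMod 11)
          (Projectivization.submodule P ⊔ Projectivization.submodule P' :
            Submodule (ZMod 11) (Fin 3 → ZMod 11)) ≤ 1 := by omega
      have e1 : Projectivization.submodule P
          = Projectivization.submodule P ⊔ Projectivization.submodule P' :=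
        Submodule.eq_of_le_of_finrank_le le_sup_left (by rw [P.finrank_submodule]; exact hfr)
      have e2 : Projectivization.submodule P'
          = Projectivization.submodule P ⊔ Projectivization.submodule P' :=
        Submodule.eq_of_le_of_finrank_le le_sup_right (by rw [P'.finrank_submodule]; exact hfr)
      exact h (Projectivization.submodule_injective (e1.trans e2.symm))
    exact (Submodule.eq_of_le_of_finrank_le hle (by rw [L.2]; exact h2le)).symm
  exact Subtype.ext ((key L1 h1 h1').trans (key L2 h2 h2').symm)

/-- Any two lines of `PG(2,11)` meet in a point. -/
lemma PG.lines_meet (L1 L2 : PGLine) : ∃ P : PGPoint, PGmem P L1 ∧ PGmem P L2 := by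
  have h1 : finrank (ZMod 11) (L1.val ⊔ L2.val : Submodule (ZMod 11) _) ≤ 3 := by
    have := Submodule.finrank_le (L1.val ⊔ L2.val)
    simpa [Module.finrank_pi] using this
  have h2 := Submodule.finrank_sup_add_finrank_inf_eq L1.val L2.val
  rw [L1.2, L2.2] at h2
  have h3 : 1 ≤ finrank (ZMod 11) (L1.val ⊓ L2.val : Submodule (ZMod 11) _) := by omega
  have h4 : (L1.val ⊓ L2.val : Submodule (ZMod 11) _) ≠ ⊥ := by
    intro h
    rw [h] at h3; simp at h3
  obtain ⟨v, hv, hv0⟩ := Submodule.exists_mem_ne_zero_of_ne_bot h4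
  refine ⟨Projectivization.mk _ v hv0, ?_, ?_⟩ <;>
    rw [PGmem, Projectivization.submodule_mk, Submodule.span_singleton_le_iff_mem]
  · exact hv.1
  · exact hv.2

/-- Every line of `PG(2,11)` has at most 12 points. -/
lemma PG.linePts_ncard_le (L : PGLine) : (linePts L).ncard ≤ 12 := by
  classical
  have hb2 : finrank (ZMod 11) L.val = 2 := L.2
  let b : Basis (Fin 2) (ZMod 11) L.val := Module.finBasisOfFinrankEq (ZMod 11) L.val hb2
  have hb1ne : ((b 1 : L.val) : Fin 3 → ZMod 11) ≠ 0 := by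
    intro h; exact b.ne_zero 1 (Submodule.coe_eq_zero.mp h)
  have hkey : ∀ t : ZMod 11, ((b 0 + t • b 1 : L.val) : Fin 3 → ZMod 11) ≠ 0 := by
    intro t h
    have h0 : (b 0 + t • b 1 : L.val) = 0 := Submodule.coe_eq_zero.mp h
    have := congrArg (fun x => b.repr x 0) h0
    simp [Finsupp.single_apply] at this
  let f : Option (ZMod 11) → PGPoint := fun o =>
    o.elim (Projectivization.mk (ZMod 11) _ hb1ne)
      (fun t => Projectivization.mk (ZMod 11) _ (hkey t))
  have hsub : linePts L ⊆ Set.range f := by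
    intro P hP
    have hrep : P.rep ∈ L.val := by
      rw [linePts, Set.mem_setOf_eq, PGmem, Projectivization.submodule_eq,
        Submodule.span_singleton_le_iff_mem] at hP
      exact hP
    set w : L.val := ⟨P.rep, hrep⟩ with hw
    have hw0 : w ≠ 0 := fun h => P.rep_nonzero (congrArg Subtype.val h)
    have hsum : (b.repr w 0) • b 0 + (b.repr w 1) • b 1 = w := by
      have := b.sum_repr w
      rwa [Fin.sum_univ_two] at this
    have hsumV : (b.repr w 0) • ((b 0 : L.val) : Fin 3 → ZMod 11)
        + (b.repr w 1) • ((b 1 : L.val) : Fin 3 → ZMod 11) = P.rep := by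
      have := congrArg Subtype.val hsum
      simpa using this
    by_cases ha : b.repr w 0 = 0
    · refine ⟨none, ?_⟩
      have hc : b.repr w 1 ≠ 0 := by
        intro hc; apply hw0; rw [← hsum, ha, hc]; simp
      show Projectivization.mk (ZMod 11) _ hb1ne = P
      conv_rhs => rw [← P.mk_rep]
      rw [Projectivization.mk_eq_mk_iff]
      have hvec : (b.repr w 1)⁻¹ • P.rep = ((b 1 : L.val) : Fin 3 → ZMod 11) := by
        rw [← hsumV, ha, zero_smul, zero_add, smul_smul, inv_mul_cancel₀ hc, one_smul]
      exact ⟨(Units.mk0 (b.repr w 1) hc)⁻¹, hvec⟩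
    · refine ⟨some (b.repr w 1 / b.repr w 0), ?_⟩
      show Projectivization.mk (ZMod 11) _ (hkey _) = P
      conv_rhs => rw [← P.mk_rep]
      rw [Projectivization.mk_eq_mk_iff]
      have hvec : (b.repr w 0)⁻¹ • P.rep = ((b 0 : L.val) : Fin 3 → ZMod 11)
          + (b.repr w 1 / b.repr w 0) • ((b 1 : L.val) : Fin 3 → ZMod 11) := by
        rw [← hsumV, smul_add, smul_smul, smul_smul, inv_mul_cancel₀ ha, one_smul,
          div_eq_inv_mul]
      refine ⟨(Units.mk0 (b.repr w 0) ha)⁻¹, ?_⟩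
      rw [show (((b 0 + (b.repr w 1 / b.repr w 0) • b 1 : L.val)) : Fin 3 → ZMod 11)
        = ((b 0 : L.val) : Fin 3 → ZMod 11)
          + (b.repr w 1 / b.repr w 0) • ((b 1 : L.val) : Fin 3 → ZMod 11) by push_cast; rfl]
      exact hvec
  calc (linePts L).ncard
      ≤ (Set.range f).ncard := Set.ncard_le_ncard hsub (Set.toFinite _)
    _ ≤ 12 := by
        rw [← Set.image_univ]
        have h1 := Set.ncard_image_le (f := f)
          (s := (Set.univ : Set (Option (ZMod 11)))) Set.finite_univ
        have h2 : (Set.univ : Set (Option (ZMod 11))).ncard = 12 := by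
          simp [Set.ncard_univ, Nat.card_eq_fintype_card]
        omega

theorem lines_through_Q_meet_SR_twice (S : Set PGPoint) (hS : IsBlockingSemioval S) (hcard : S.ncard = 25)
    (ℓ : PGLine) (hℓ : IsSecant S 10 ℓ)
    (Q R : PGPoint) (hQR : Q ≠ R)
    (hQℓ : PGmem Q ℓ) (hRℓ : PGmem R ℓ) (hQS : Q ∉ S) (hRS : R ∉ S)
    (SR : Set PGPoint)
    (hSR : SR = {P | P ∈ S ∧ ¬ PGmem P ℓ ∧ ∃ t : PGLine, PGmem P t ∧ IsTangent S t ∧ PGmem R t})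
    (m : PGLine) (hQm : PGmem Q m) (hmℓ : m ≠ ℓ)
    (hmeets : ∃ P ∈ SR, PGmem P m) :
    2 ≤ ({P ∈ SR | PGmem P m}).ncard := by
  subst hSR
  obtain ⟨⟨hblock1, _⟩, hsemi⟩ := hS
  obtain ⟨P0, hP0SR, hP0m⟩ := hmeets
  obtain ⟨hP0S, hP0l, t0, hP0t0, ht0tan, hRt0⟩ := hP0SR
  -- Step A : the only points of ℓ outside S are Q and R.
  have hQR_only : ∀ Y : PGPoint, PGmem Y ℓ → Y ∉ S → Y = Q ∨ Y = R := by
    have hR_not : R ∉ secantPts S ℓ := fun h => hRS h.1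
    have hQ_not : Q ∉ insert R (secantPts S ℓ) := by
      rintro (rfl | h)
      · exact hQR rfl
      · exact hQS h.1
    have hset : insert Q (insert R (secantPts S ℓ)) = linePts ℓ := by
      apply Set.eq_of_subset_of_ncard_le
      · rintro x (rfl | rfl | hx)
        · exact hQℓ
        · exact hRℓ
        · exact hx.2
      · have hcard' : (insert Q (insert R (secantPts S ℓ))).ncard = 12 := by
          rw [Set.ncard_insert_of_notMem hQ_not (Set.toFinite _),
            Set.ncard_insert_of_notMem hR_not (Set.toFinite _), hℓ]
        rw [hcard']
        exact PG.linePts_ncard_le ℓ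
      · exact Set.toFinite _
    intro Y hYl hYS
    have hY : Y ∈ insert Q (insert R (secantPts S ℓ)) := by
      rw [hset]; exact hYl
    rcases hY with rfl | rfl | h
    · exact Or.inl rfl
    · exact Or.inr rfl
    · exact absurd h.1 hYS
  -- Step C : m is not a tangent line.
  have hmnt : ¬ IsTangent S m := by
    intro hmt
    obtain ⟨L, hL, hLuniq⟩ := hsemi P0 hP0S
    have e1 : m = L := hLuniq m ⟨hP0m, hmt⟩
    have e2 : t0 = L := hLuniq t0 ⟨hP0t0, ht0tan⟩
    have hRm : PGmem R m := by rw [e1, ← e2]; exact hRt0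
    exact hmℓ (PG.line_unique hQR hQm hRm hQℓ hRℓ)
  -- Step B : every point of S on m is a point of S_R.
  have hsubset : secantPts S m ⊆
      {P ∈ {P | P ∈ S ∧ ¬ PGmem P ℓ ∧
        ∃ t : PGLine, PGmem P t ∧ IsTangent S t ∧ PGmem R t} | PGmem P m} := by
    rintro X ⟨hXS, hXm⟩
    have hXQ : X ≠ Q := fun h => hQS (h ▸ hXS)
    have hXl : ¬ PGmem X ℓ := fun hXl =>
      hmℓ (PG.line_unique hXQ hXm hQm hXl hQℓ)
    obtain ⟨t, ⟨hXt, httan⟩, _⟩ := hsemi X hXS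
    obtain ⟨Y, hYt, hYl⟩ := PG.lines_meet t ℓ
    have hYS : Y ∉ S := by
      intro hYS
      have hXY : X ≠ Y := fun h => hXl (h ▸ hYl)
      have h2 : 2 ≤ (secantPts S t).ncard := by
        have hsub2 : {X, Y} ⊆ secantPts S t := by
          rintro z (rfl | rfl)
          · exact ⟨hXS, hXt⟩
          · exact ⟨hYS, hYt⟩
        calc 2 = ({X, Y} : Set PGPoint).ncard := (Set.ncard_pair hXY).symm
          _ ≤ _ := Set.ncard_le_ncard hsub2 (Set.toFinite _)
      have h1 : (secantPts S t).ncard = 1 := httan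
      omega
    rcases hQR_only Y hYl hYS with rfl | rfl
    · exact absurd (show IsTangent S m from
        (PG.line_unique hXQ hXt hYt hXm hQm) ▸ httan) hmnt
    · exact ⟨⟨hXS, hXl, t, hXt, httan, hYt⟩, hXm⟩
  -- Step D : m meets S in at least 2 points.
  have hne : (secantPts S m).Nonempty := hblock1 m
  have hpos : 0 < (secantPts S m).ncard :=
    (Set.ncard_pos (Set.toFinite _)).mpr hne
  have hne1 : (secantPts S m).ncard ≠ 1 := fun h => hmnt h
  have h2 : 2 ≤ (secantPts S m).ncard := by omega
  exact le_trans h2 (Set.ncard_le_ncard hsubset (Set.toFinite _))
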